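/- Let G be a finite non-cyclic group of odd order, and suppose there exists a nontrivial subgroup F of G such that every proper non-cyclic subgroup of G has an EF-partition. Then G is a minimal non-cyclic group, i.e. every proper subgroup of G is cyclic. -/

import Mathlib

/-- A strict `S`-partition of a group `G`: a finite collection of at least two proper
subgroups of `G` covering `G`, any two distinct members of which intersect exactly in `S`. -/
def IsStrictPartition {G : Type*} [Group G] (S : Subgroup G) (P : Finset (Subgroup G)) : Prop :=
  2 ≤ P.card ∧ (∀ H ∈ P, H ≠ ⊤) ∧ (∀ g : G, ∃ H ∈ P, g ∈ H) ∧
    ∀ H ∈ P, ∀ K ∈ P, H ≠ K → H ⊓ K = S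

/-- An `ES`-partition: a strict `S`-partition all of whose components have the same order. -/
def IsESPartition {G : Type*} [Group G] (S : Subgroup G) (P : Finset (Subgroup G)) : Prop :=
  IsStrictPartition S P ∧ ∀ H ∈ P, ∀ K ∈ P, Nat.card H = Nat.card K

section Helpers

variable {M : Type*} [Group M]

private lemma card_lt_of_ne_top' [Finite M] {Q : Subgroup M} (h : Q ≠ ⊤) :
    Nat.card Q < Nat.card M := by
  have h1 : Nat.card Q ∣ Nat.card M := Subgroup.card_subgroup_dvd_card Q
  rcases lt_or_eq_of_le (Nat.le_of_dvd Nat.card_pos h1) with h3 | h3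
  · exact h3
  · exact absurd (Subgroup.eq_top_of_card_eq Q h3) h

private lemma commute_of_mem_cyclic {K : Subgroup M} (hK : IsCyclic K) {a b : M}
    (ha : a ∈ K) (hb : b ∈ K) : Commute a b := by
  obtain ⟨g, hg⟩ := hK
  obtain ⟨m, hm⟩ := hg ⟨a, ha⟩
  obtain ⟨n, hn⟩ := hg ⟨b, hb⟩
  have hma : a = (g : M) ^ m := by
    have := congrArg (Subtype.val) hm
    simpa using this.symm
  have hnb : b = (g : M) ^ n := by
    have := congrArg (Subtype.val) hn
    simpa using this.symm
  rw [hma, hnb]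
  exact (Commute.refl (g : M)).zpow_zpow m n

private lemma pow_right_comm' {x y c : M} (h : y * x = x * y * c)
    (hc : ∀ z : M, Commute c z) : ∀ n : ℕ, y ^ n * x = x * y ^ n * c ^ n := by
  intro n
  induction n with
  | zero => simp
  | succ n ih =>
    have hcy : c ^ n * y = y * c ^ n := ((hc y).pow_left n).eq
    calc y ^ (n + 1) * x = y ^ n * (y * x) := by rw [pow_succ, mul_assoc]
    _ = y ^ n * x * (y * c) := by rw [h]; simp [mul_assoc]
    _ = x * y ^ n * c ^ n * (y * c) := by rw [ih]
    _ = x * (y ^ n * (c ^ n * y)) * c := by simp [mul_assoc]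
    _ = x * (y ^ n * (y * c ^ n)) * c := by rw [hcy]
    _ = x * y ^ (n + 1) * c ^ (n + 1) := by rw [pow_succ, pow_succ]; simp [mul_assoc]

private lemma pow_left_comm' {x y c : M} (h : y * x = x * y * c)
    (hc : ∀ z : M, Commute c z) : ∀ n : ℕ, y * x ^ n = x ^ n * y * c ^ n := by
  intro n
  induction n with
  | zero => simp
  | succ n ih =>
    have hcx : c ^ n * x = x * c ^ n := ((hc x).pow_left n).eq
    calc y * x ^ (n + 1) = (y * x ^ n) * x := by rw [pow_succ, mul_assoc]
    _ = x ^ n * y * (c ^ n * x) := by rw [ih]; simp [mul_assoc]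
    _ = x ^ n * y * (x * c ^ n) := by rw [hcx]
    _ = x ^ n * (y * x) * c ^ n := by simp [mul_assoc]
    _ = x ^ n * (x * y * c) * c ^ n := by rw [h]
    _ = x ^ (n + 1) * y * (c ^ n * c) := by
        rw [pow_succ]; simp only [mul_assoc]
        rw [((Commute.refl c).pow_right n).eq]
    _ = x ^ (n + 1) * y * c ^ (n + 1) := by rw [← pow_succ]

private lemma mul_pow_central {x y c : M} (h : y * x = x * y * c)
    (hc : ∀ z : M, Commute c z) : ∀ n : ℕ, (x * y) ^ n = x ^ n * y ^ n * c ^ (n.choose 2) := by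
  intro n
  induction n with
  | zero => simp
  | succ n ih =>
    have hyx : y ^ n * x = x * y ^ n * c ^ n := pow_right_comm' h hc n
    have hchoose : (n + 1).choose 2 = n.choose 2 + n := by
      rw [Nat.choose_succ_succ]
      simp [Nat.choose_one_right, Nat.add_comm]
    have hcc : ∀ m : ℕ, ∀ z : M, c ^ m * z = z * c ^ m := fun m z => ((hc z).pow_left m).eq
    calc (x * y) ^ (n + 1) = (x * y) ^ n * (x * y) := by rw [pow_succ]
    _ = x ^ n * y ^ n * c ^ n.choose 2 * (x * y) := by rw [ih]
    _ = x ^ n * (y ^ n * (c ^ n.choose 2 * x)) * y := by simp [mul_assoc]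
    _ = x ^ n * (y ^ n * (x * c ^ n.choose 2)) * y := by rw [hcc]
    _ = x ^ n * (y ^ n * x) * (c ^ n.choose 2 * y) := by simp [mul_assoc]
    _ = x ^ n * (y ^ n * x) * (y * c ^ n.choose 2) := by rw [hcc]
    _ = x ^ n * (x * y ^ n * c ^ n) * (y * c ^ n.choose 2) := by rw [hyx]
    _ = x ^ (n + 1) * (y ^ n * (c ^ n * y)) * c ^ n.choose 2 := by
        rw [pow_succ]; simp [mul_assoc]
    _ = x ^ (n + 1) * (y ^ n * (y * c ^ n)) * c ^ n.choose 2 := by rw [hcc]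
    _ = x ^ (n + 1) * y ^ (n + 1) * (c ^ n * c ^ n.choose 2) := by
        rw [pow_succ]; simp [mul_assoc, pow_succ]
    _ = x ^ (n + 1) * y ^ (n + 1) * c ^ ((n + 1).choose 2) := by
        rw [← pow_add, hchoose, Nat.add_comm n (n.choose 2)]

private lemma card_le_of_cyclic_exp {K : Type*} [Group K] [Finite K] (h : IsCyclic K)
    {p : ℕ} (hp : 0 < p) (hexp : ∀ x : K, x ^ p = 1) : Nat.card K ≤ p := by
  obtain ⟨g, hg⟩ := h
  have h1 : orderOf g = Nat.card K := orderOf_eq_card_of_forall_mem_zpowers hg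
  have h2 : orderOf g ∣ p := orderOf_dvd_of_pow_eq_one (hexp g)
  exact Nat.le_of_dvd hp (h1 ▸ h2)

end Helpers

section Core

private lemma core {M : Type*} [Group M] [Finite M] (hodd : Odd (Nat.card M))
    (hnc : ¬ IsCyclic M) (hpc : ∀ Q : Subgroup M, Q ≠ ⊤ → IsCyclic Q)
    {S : Subgroup M} (hS : S ≠ ⊥) {P : Finset (Subgroup M)}
    (hP : IsESPartition S P) : False := by
  obtain ⟨⟨hcard2, hproper, hcover, hint⟩, hEq⟩ := hP
  obtain ⟨K₀, hK₀, K₁, hK₁, hne01⟩ := Finset.one_lt_card.mp hcard2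
  set k := Nat.card K₀ with hkdef
  have hkK : ∀ K ∈ P, Nat.card K = k := fun K hK => hEq K hK K₀ hK₀
  have hSle : ∀ K ∈ P, S ≤ K := by
    intro K hK
    obtain ⟨K', hK', hne⟩ := Finset.exists_mem_ne hcard2 K
    rw [← hint K hK K' hK' (Ne.symm hne)]
    exact inf_le_left
  have hcyc : ∀ K ∈ P, IsCyclic K := fun K hK => hpc K (hproper K hK)
  have hkpos : 0 < k := Nat.card_pos
  have hsdvd : Nat.card S ∣ k := Subgroup.card_dvd_of_le (hSle K₀ hK₀)
  have hs1 : 1 < Nat.card S := (Subgroup.one_lt_card_iff_ne_bot S).mpr hS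
  have hslt : Nat.card S < k := by
    rcases lt_or_eq_of_le (Nat.le_of_dvd hkpos hsdvd) with h | h
    · exact h
    · exfalso
      have e0 : S = K₀ := Subgroup.eq_of_le_of_card_ge (hSle K₀ hK₀) (le_of_eq h.symm)
      have e1 : S = K₁ := Subgroup.eq_of_le_of_card_ge (hSle K₁ hK₁)
        (le_of_eq (by rw [hkK K₁ hK₁, ← h]))
      exact hne01 (e0 ▸ e1)
  -- exponent divides k
  have horder : ∀ x : M, x ^ k = 1 := by
    intro x
    obtain ⟨K, hK, hxK⟩ := hcover x
    have h1 : orderOf (⟨x, hxK⟩ : K) ∣ Nat.card K := orderOf_dvd_natCard _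
    rw [Subgroup.orderOf_mk, hkK K hK] at h1
    exact orderOf_dvd_iff_pow_eq_one.mp h1
  have hklt : k < Nat.card M := card_lt_of_ne_top' (hproper K₀ hK₀)
  have hM0 : Nat.card M ≠ 0 := Nat.card_pos.ne'
  have hk0 : k ≠ 0 := hkpos.ne'
  -- M is a p-group
  have key : ∀ q : ℕ, q.Prime → q ∣ Nat.card M →
      ((Nat.card M).factorization q ≤ k.factorization q ∨
        Nat.card M = q ^ (Nat.card M).factorization q) := by
    intro q hq hqdvd
    haveI := Fact.mk hq
    obtain ⟨Q⟩ : Nonempty (Sylow q M) := inferInstance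
    by_cases htop : (Q : Subgroup M) = ⊤
    · right
      have h1 := Q.card_eq_multiplicity
      rw [htop, Subgroup.card_top] at h1
      exact h1
    · left
      obtain ⟨g, hg⟩ := hpc Q htop
      have hord : orderOf (g : M) = Nat.card Q := by
        rw [← orderOf_eq_card_of_forall_mem_zpowers hg]
        exact Subgroup.orderOf_coe g
      have hdvd : orderOf (g : M) ∣ k := orderOf_dvd_of_pow_eq_one (horder (g : M))
      rw [hord, Q.card_eq_multiplicity] at hdvd
      exact (Nat.Prime.pow_dvd_iff_le_factorization hq hk0).mp hdvd
  obtain ⟨p, hp, hcardM⟩ : ∃ p : ℕ, p.Prime ∧ Nat.card M = p ^ (Nat.card M).factorization p := by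
    by_contra hno
    push_neg at hno
    have hdvd : Nat.card M ∣ k := by
      rw [← Nat.factorization_le_iff_dvd hM0 hk0]
      intro q
      by_cases hq : q.Prime
      · by_cases hqd : q ∣ Nat.card M
        · rcases key q hq hqd with h | h
          · exact h
          · exact absurd h (hno q hq)
        · simp [Nat.factorization_eq_zero_of_not_dvd hqd]
      · simp [Nat.factorization_eq_zero_of_not_prime _ hq]
    exact absurd (Nat.le_of_dvd hkpos hdvd) (not_le.mpr hklt)
  haveI := Fact.mk hp
  set A := (Nat.card M).factorization p with hAdef
  have hA1 : 1 ≤ A := by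
    rcases Nat.eq_zero_or_pos A with h | h
    · exfalso
      rw [h, pow_zero] at hcardM
      have h1 : Nat.card M = 1 := hcardM
      haveI : Subsingleton M := (Nat.card_eq_one_iff_unique.mp h1).1
      exact hnc inferInstance
    · exact h
  have hpdvd : p ∣ Nat.card M := by
    rw [hcardM]
    exact dvd_pow_self p (by omega)
  have hpodd : Odd p := by
    rcases hp.eq_two_or_odd' with h | h
    · exfalso
      rw [h] at hpdvd
      rw [← Nat.not_even_iff_odd] at hodd
      exact hodd (even_iff_two_dvd.mpr hpdvd)
    · exact h
  have hpg : IsPGroup p M := IsPGroup.of_card hcardM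
  -- components are coatoms
  have hcoatom : ∀ K ∈ P, IsCoatom K := by
    intro K hK
    refine ⟨hproper K hK, ?_⟩
    intro B hKB
    by_contra hB
    obtain ⟨g, hg⟩ := hpc B hB
    obtain ⟨K', hK', hgK'⟩ := hcover (g : M)
    have hBK' : B ≤ K' := by
      intro b hbB
      obtain ⟨n, hn⟩ := hg ⟨b, hbB⟩
      have hb : b = (g : M) ^ n := by
        have := congrArg (Subtype.val) hn
        simpa using this.symm
      rw [hb]
      exact Subgroup.zpow_mem K' hgK' n
    have hlt : K < K' := lt_of_lt_of_le hKB hBK'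
    have : K = K' := Subgroup.eq_of_le_of_card_ge hlt.le
      (le_of_eq (by rw [hkK K' hK', hkK K hK]))
    exact hlt.ne this
  haveI hnil : Group.IsNilpotent M := hpg.isNilpotent
  have hnorm : ∀ K ∈ P, K.Normal := fun K hK =>
    Subgroup.NormalizerCondition.normal_of_coatom K normalizerCondition_of_isNilpotent
      (hcoatom K hK)
  -- key quotient facts
  have hquot : ∀ K ∈ P, (∀ x : M, x ^ p ∈ K) ∧ (∀ a b : M, a⁻¹ * b⁻¹ * a * b ∈ K) := by
    intro K hK
    haveI := hnorm K hK
    set π := QuotientGroup.mk' K with hπ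
    have hπsur : Function.Surjective π := QuotientGroup.mk'_surjective K
    have hsub : ∀ W : Subgroup (M ⧸ K), W = ⊥ ∨ W = ⊤ := by
      intro W
      have hle : K ≤ W.comap π := by
        intro x hx
        have hx1 : π x = 1 := (QuotientGroup.eq_one_iff x).mpr hx
        refine Subgroup.mem_comap.mpr ?_
        rw [hx1]
        exact W.one_mem
      rcases eq_or_lt_of_le hle with he | hlt
      · left
        rw [← Subgroup.map_comap_eq_self_of_surjective hπsur W, ← he]
        rw [Subgroup.map_eq_bot_iff]
        rw [hπ, QuotientGroup.ker_mk']
      · right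
        have := (hcoatom K hK).2 _ hlt
        rw [← Subgroup.map_comap_eq_self_of_surjective hπsur W, this]
        exact Subgroup.map_top_of_surjective π hπsur
    -- quotient is commutative and has exponent p
    have hcomm : ∀ u v : M ⧸ K, u * v = v * u := by
      intro u v
      by_cases htriv : ∀ w : M ⧸ K, w = 1
      · rw [htriv u, htriv v]
      · push_neg at htriv
        obtain ⟨w, hw⟩ := htriv
        have hzw : Subgroup.zpowers w = ⊤ :=
          (hsub _).resolve_left (by simpa [Subgroup.zpowers_eq_bot] using hw)
        have hu : u ∈ Subgroup.zpowers w := hzw ▸ Subgroup.mem_top u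
        have hv : v ∈ Subgroup.zpowers w := hzw ▸ Subgroup.mem_top v
        obtain ⟨mu, hmu⟩ := Subgroup.mem_zpowers_iff.mp hu
        obtain ⟨mv, hmv⟩ := Subgroup.mem_zpowers_iff.mp hv
        rw [← hmu, ← hmv]
        exact ((Commute.refl w).zpow_zpow mu mv)
    have hexp : ∀ z : M ⧸ K, z ^ p = 1 := by
      have hstep : ∀ n : ℕ, ∀ z : M ⧸ K, z ^ p ^ n = 1 → z ^ p = 1 := by
        intro n
        induction n with
        | zero => intro z hz; rw [pow_zero, pow_one] at hz; rw [hz]; exact one_pow p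
        | succ n ih =>
          intro z hz
          by_cases hu : z ^ p ^ n = 1
          · exact ih z hu
          · set u := z ^ p ^ n with hudef
            have hup : u ^ p = 1 := by
              rw [hudef, ← pow_mul, ← pow_succ]
              exact hz
            have hzu : Subgroup.zpowers u = ⊤ :=
              (hsub _).resolve_left (by simpa [Subgroup.zpowers_eq_bot] using hu)
            have hzmem : z ∈ Subgroup.zpowers u := hzu ▸ Subgroup.mem_top z
            obtain ⟨m, hm⟩ := Subgroup.mem_zpowers_iff.mp hzmem
            rw [← hm]
            calc (u ^ m) ^ p = u ^ (m * p) := by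
                  rw [← zpow_natCast (u ^ m) p, ← zpow_mul]
            _ = (u ^ (p : ℤ)) ^ m := by rw [← zpow_mul, mul_comm]
            _ = 1 := by rw [zpow_natCast, hup, one_zpow]
      intro z
      obtain ⟨n, hn⟩ := hpg.to_quotient K z
      exact hstep n z hn
    constructor
    · intro x
      have : π (x ^ p) = 1 := by
        rw [map_pow]
        exact hexp (π x)
      exact (QuotientGroup.eq_one_iff _).mp this
    · intro a b
      have : π (a⁻¹ * b⁻¹ * a * b) = 1 := by
        simp only [map_mul, map_inv]
        rw [mul_assoc, hcomm (π a) (π b), ← mul_assoc]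
        group
      exact (QuotientGroup.eq_one_iff _).mp this
  have hSint : K₀ ⊓ K₁ = S := hint K₀ hK₀ K₁ hK₁ hne01
  have hpowS : ∀ x : M, x ^ p ∈ S := by
    intro x
    rw [← hSint]
    exact ⟨(hquot K₀ hK₀).1 x, (hquot K₁ hK₁).1 x⟩
  have hcommS : ∀ a b : M, a⁻¹ * b⁻¹ * a * b ∈ S := by
    intro a b
    rw [← hSint]
    exact ⟨(hquot K₀ hK₀).2 a b, (hquot K₁ hK₁).2 a b⟩
  -- S is central
  have hcentral : ∀ z ∈ S, ∀ x : M, Commute z x := by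
    intro z hz x
    obtain ⟨K, hK, hxK⟩ := hcover x
    exact commute_of_mem_cyclic (hcyc K hK) (hSle K hK hz) hxK
  -- the p-power map is a homomorphism
  have hbasic : ∀ x y : M, y * x = x * y * (y⁻¹ * x⁻¹ * y * x) := by
    intro x y; group
  have hcp : ∀ x y : M, (y⁻¹ * x⁻¹ * y * x) ^ p = 1 := by
    intro x y
    set c := y⁻¹ * x⁻¹ * y * x with hcdef
    have hcS : c ∈ S := hcommS y x
    have hcc : ∀ z : M, Commute c z := fun z => hcentral c hcS z
    have h1 : y * x ^ p = x ^ p * y * c ^ p := pow_left_comm' (hbasic x y) hcc p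
    have h2 : y * x ^ p = x ^ p * y := ((hcentral (x ^ p) (hpowS x) y)).symm.eq
    rw [h2] at h1
    have h3 : x ^ p * y * c ^ p = x ^ p * y * 1 := by rw [mul_one]; exact h1.symm
    exact mul_left_cancel h3
  have hmul : ∀ x y : M, (x * y) ^ p = x ^ p * y ^ p := by
    intro x y
    set c := y⁻¹ * x⁻¹ * y * x with hcdef
    have hcS : c ∈ S := hcommS y x
    have hcc : ∀ z : M, Commute c z := fun z => hcentral c hcS z
    have h1 : (x * y) ^ p = x ^ p * y ^ p * c ^ (p.choose 2) :=
      mul_pow_central (hbasic x y) hcc p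
    have h2 : c ^ (p.choose 2) = 1 := by
      have h2d : 2 ∣ p - 1 := by
        obtain ⟨r, hr⟩ := hpodd
        omega
      have : p.choose 2 = p * ((p - 1) / 2) := by
        rw [Nat.choose_two_right, Nat.mul_div_assoc p h2d]
      rw [this, pow_mul, hcp x y, one_pow]
    rw [h1, h2, mul_one]
  set φ : M →* M := ⟨⟨fun x => x ^ p, one_pow p⟩, fun x y => hmul x y⟩ with hφdef
  have hrange : φ.range ≤ S := by
    rintro _ ⟨x, rfl⟩
    exact hpowS x
  -- kernel is small
  have hkdvdM : k ∣ Nat.card M := Subgroup.card_subgroup_dvd_card K₀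
  have hkdvdpA : k ∣ p ^ A := hcardM ▸ hkdvdM
  obtain ⟨j, hjle, hj⟩ := (Nat.dvd_prime_pow hp).mp hkdvdpA
  have hsdvdpj : Nat.card S ∣ p ^ j := by rw [← hj]; exact hsdvd
  obtain ⟨i, hile, hi⟩ := (Nat.dvd_prime_pow hp).mp hsdvdpj
  have hi1 : 1 ≤ i := by
    by_contra hi0
    push_neg at hi0
    interval_cases i
    rw [pow_zero] at hi
    omega
  have hsp : p ≤ Nat.card S := by
    rw [hi]
    calc p = p ^ 1 := (pow_one p).symm
    _ ≤ p ^ i := Nat.pow_le_pow_right hp.pos hi1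
  have hkp : p < k := lt_of_le_of_lt hsp hslt
  have hker : Nat.card φ.ker ≤ p := by
    have hne : φ.ker ≠ ⊤ := by
      intro h
      obtain ⟨g, hg⟩ := hcyc K₀ hK₀
      have hgk : orderOf (g : M) = k := by
        rw [hkdef, ← orderOf_eq_card_of_forall_mem_zpowers hg]
        exact Subgroup.orderOf_coe g
      have : (g : M) ∈ φ.ker := h ▸ Subgroup.mem_top _
      have hgp : (g : M) ^ p = 1 := this
      have : orderOf (g : M) ∣ p := orderOf_dvd_of_pow_eq_one hgp
      rw [hgk] at this
      have := Nat.le_of_dvd hp.pos this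
      omega
    have hc := hpc φ.ker hne
    exact card_le_of_cyclic_exp hc hp.pos (fun x => by
      have hx : (x : M) ∈ φ.ker := x.2
      have : (x : M) ^ p = 1 := hx
      exact Subtype.ext (by simpa using this))
  -- final count
  have hcount : Nat.card M = Nat.card φ.range * Nat.card φ.ker := by
    rw [Subgroup.card_eq_card_quotient_mul_card_subgroup φ.ker]
    congr 1
    exact Nat.card_congr (QuotientGroup.quotientKerEquivRange φ).toEquiv
  have hrle : Nat.card φ.range ≤ Nat.card S :=
    Nat.le_of_dvd Nat.card_pos (Subgroup.card_dvd_of_le hrange)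
  have hsp_dvd : Nat.card S * p ∣ k := by
    have hij : i < j := by
      have h2 := hslt
      rw [hi, hj] at h2
      exact (Nat.pow_lt_pow_iff_right hp.one_lt).mp h2
    rw [hi, hj, ← pow_succ]
    exact Nat.pow_dvd_pow p (by omega)
  have hfinal : Nat.card M ≤ Nat.card S * p := by
    rw [hcount]
    exact Nat.mul_le_mul hrle hker
  have : Nat.card S * p ≤ k := Nat.le_of_dvd hkpos hsp_dvd
  omega

end Core

theorem minimal_noncyclic_of_odd_EFPartition {G : Type*} [Group G] [Finite G]
    (hodd : Odd (Nat.card G)) (hnc : ¬ IsCyclic G)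
    (hF : ∃ F : Subgroup G, F ≠ ⊥ ∧
      ∀ H : Subgroup G, H ≠ ⊤ → ¬ IsCyclic H →
        F ≤ H ∧ ∃ P : Finset (Subgroup H), IsESPartition (F.subgroupOf H) P) :
    ∀ H : Subgroup G, H ≠ ⊤ → IsCyclic H := by
  obtain ⟨F, hF0, hFh⟩ := hF
  have key : ∀ n : ℕ, ∀ H : Subgroup G, Nat.card H ≤ n → H ≠ ⊤ → IsCyclic H := by
    intro n
    induction n with
    | zero =>
      intro H h0 _
      exact absurd (Nat.card_pos (α := H)) (by omega)
    | succ n ih =>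
      intro H hle hH
      by_contra hncH
      obtain ⟨hFle, P, hP⟩ := hFh H hH hncH
      have hoddH : Odd (Nat.card H) := by
        obtain ⟨c, hc⟩ := Subgroup.card_subgroup_dvd_card H
        rcases Nat.even_or_odd (Nat.card H) with he | ho
        · exfalso
          rw [← Nat.not_even_iff_odd] at hodd
          exact hodd (hc ▸ he.mul_right c)
        · exact ho
      have hpcH : ∀ Q : Subgroup ↥H, Q ≠ ⊤ → IsCyclic Q := by
        intro Q hQ
        have hlt : Nat.card Q < Nat.card H := card_lt_of_ne_top' hQ
        set Q' := Q.map H.subtype with hQ'def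
        have e : ↥Q ≃* ↥Q' := Subgroup.equivMapOfInjective Q H.subtype H.subtype_injective
        have hcardQ : Nat.card Q' = Nat.card Q := (Nat.card_congr e.toEquiv).symm
        have hQ'top : Q' ≠ ⊤ := by
          intro h
          rw [h] at hcardQ
          have h1 : Nat.card H ≤ Nat.card G :=
            Nat.le_of_dvd Nat.card_pos (Subgroup.card_subgroup_dvd_card H)
          rw [Subgroup.card_top] at hcardQ
          omega
        have := ih Q' (by omega) hQ'top
        exact isCyclic_of_surjective e.symm e.symm.surjective
      have hSbot : F.subgroupOf H ≠ ⊥ := by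
        intro h
        have hd : Disjoint F H := Subgroup.subgroupOf_eq_bot.mp h
        exact hF0 (hd.eq_bot_of_le hFle)
      exact core hoddH hncH hpcH hSbot hP
  intro H hH
  exact key (Nat.card H) H le_rfl hH
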